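/- Let a group G act on a tree T, and let A and B be subgroups of G each of which fixes a vertex of T. If the subgroup generated by A and B is abelian, then the subgroup generated by A and B fixes a vertex of T. -/

import Mathlib

open SimpleGraph

section Helpers

variable {G V : Type*} [Group G] [MulAction G V] {T : SimpleGraph V}

/-- The graph homomorphism given by the action of `g`. -/
private def smulHom (hact : ∀ (g : G) (u v : V), T.Adj u v → T.Adj (g • u) (g • v)) (g : G) :
    T →g T := ⟨fun v => g • v, fun {u v} h => hact g u v h⟩

private lemma dist_smul' (hc : T.Connected)
    (hact : ∀ (g : G) (u v : V), T.Adj u v → T.Adj (g • u) (g • v)) (g : G) (u v : V) :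
    T.dist (g • u) (g • v) = T.dist u v := by
  have key : ∀ (g : G) (u v : V), T.dist (g • u) (g • v) ≤ T.dist u v := by
    intro g u v
    obtain ⟨p, hp⟩ := hc.exists_walk_length_eq_dist u v
    calc T.dist (g • u) (g • v) ≤ (p.map (smulHom hact g)).length := dist_le _
      _ = p.length := p.length_map _
      _ = _ := hp
  refine le_antisymm (key g u v) ?_
  simpa using key g⁻¹ (g • u) (g • v)

private lemma list_map_fix {α : Type*} {f : α → α} :
    ∀ {l : List α}, l.map f = l → ∀ v ∈ l, f v = v := by
  intro l
  induction l with
  | nil => simp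
  | cons a l ih =>
    intro h v hv
    rw [List.map_cons, List.cons.injEq] at h
    rw [List.mem_cons] at hv
    rcases hv with hv | hv
    · exact hv ▸ h.1
    · exact ih h.2 v hv

/-- If `g` fixes the endpoints of a path in a tree, it fixes every vertex on it. -/
private lemma fix_path (hT : T.IsTree)
    (hact : ∀ (g : G) (u v : V), T.Adj u v → T.Adj (g • u) (g • v)) (g : G) {x y : V}
    (hx : g • x = x) (hy : g • y = y) (p : T.Walk x y) (hp : p.IsPath) :
    ∀ v ∈ p.support, g • v = v := by
  have hinj : Function.Injective fun v : V => g • v := MulAction.injective g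
  have hq : ((p.map (smulHom hact g)).copy hx hy).IsPath := by
    refine (Walk.isPath_copy _ _ _).mpr ?_
    exact Walk.map_isPath_of_injective hinj hp
  have heq := (hT.existsUnique_path x y).unique hq hp
  have hs : p.support.map (fun v : V => g • v) = p.support := by
    have := congrArg Walk.support heq
    exact (Walk.support_map _ _).symm.trans ((Walk.support_copy _ _ _).symm.trans this)
  exact list_map_fix hs

/-- On a walk realizing the distance to `b`, interior vertices are strictly closer to `b`. -/
private lemma mem_support_dist_lt {u b v : V} (p : T.Walk u b)
    (hl : p.length = T.dist u b) (hv : v ∈ p.support) (hne : v ≠ u) :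
    T.dist v b < T.dist u b := by
  obtain ⟨q, r, rfl⟩ := Walk.mem_support_iff_exists_append.mp hv
  have hql : 1 ≤ q.length := by
    rcases Nat.eq_zero_or_pos q.length with h0 | h0
    · exact absurd (Walk.eq_of_length_eq_zero h0).symm hne
    · exact h0
  have := dist_le r
  have hlen : q.length + r.length = T.dist u b := by
    rw [← hl, Walk.length_append]
  omega

/-- In a tree, adjacent vertices have different distances to any vertex `b`. -/
private lemma adj_dist_ne (hT : T.IsTree) {x y b : V} (hadj : T.Adj x y) :
    T.dist x b ≠ T.dist y b := by
  intro h
  obtain ⟨px, hpx, hlx⟩ := hT.isConnected.exists_path_of_dist x b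
  obtain ⟨py, hpy, hly⟩ := hT.isConnected.exists_path_of_dist y b
  have hxmem : x ∉ py.support := by
    intro hmem
    rcases eq_or_ne x y with rfl | hxy
    · exact hadj.ne rfl
    · have := mem_support_dist_lt py hly hmem hxy
      omega
  have hcons : (Walk.cons hadj py).IsPath := hpy.cons hxmem
  have heq := (hT.existsUnique_path x b).unique hcons hpx
  have := congrArg Walk.length heq
  rw [Walk.length_cons, hlx, hly] at this
  omega

/-- In a tree, a vertex `y ≠ b` has a unique neighbor closer to `b`. -/
private lemma down_unique (hT : T.IsTree) {b x y z : V} (hyx : T.Adj y x) (hyz : T.Adj y z)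
    (hx : T.dist x b + 1 = T.dist y b) (hz : T.dist z b + 1 = T.dist y b) : x = z := by
  obtain ⟨px, hpx, hlx⟩ := hT.isConnected.exists_path_of_dist x b
  obtain ⟨pz, hpz, hlz⟩ := hT.isConnected.exists_path_of_dist z b
  have hy1 : y ∉ px.support := by
    intro hmem
    have := mem_support_dist_lt px hlx hmem hyx.ne
    omega
  have hy2 : y ∉ pz.support := by
    intro hmem
    have := mem_support_dist_lt pz hlz hmem hyz.ne
    omega
  have h1 : (Walk.cons hyx px).IsPath := hpx.cons hy1
  have h2 : (Walk.cons hyz pz).IsPath := hpz.cons hy2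
  have heq := (hT.existsUnique_path y b).unique h1 h2
  have hs := congrArg Walk.support heq
  rw [Walk.support_cons, Walk.support_cons, px.support_eq_cons, pz.support_eq_cons] at hs
  simp only [List.cons.injEq] at hs
  exact hs.2.1

/-- Adjacent vertices in a tree have distances to `b` differing by exactly one. -/
private lemma adj_dist_cases (hT : T.IsTree) {x y b : V} (hadj : T.Adj x y) :
    T.dist x b + 1 = T.dist y b ∨ T.dist y b + 1 = T.dist x b := by
  have h1 : T.dist x y = 1 := dist_eq_one_iff_adj.mpr hadj
  have h2 : T.dist x b ≤ T.dist x y + T.dist y b := hT.isConnected.dist_triangle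
  have h3 : T.dist y b ≤ T.dist y x + T.dist x b := hT.isConnected.dist_triangle
  have h4 : T.dist y x = 1 := dist_eq_one_iff_adj.mpr hadj.symm
  have h5 := adj_dist_ne hT hadj (b := b)
  omega

/-- If a path starts by moving away from `b` (the previous vertex `x` is closer),
then its endpoint is strictly farther from `b` than `x`. -/
private lemma ascend (hT : T.IsTree) (b : V) : ∀ {y q : V} (w : T.Walk y q), w.IsPath →
    ∀ x, T.Adj y x → x ∉ w.support → T.dist x b + 1 = T.dist y b → T.dist x b < T.dist q b := by
  intro y q w
  induction w with
  | nil => intro _ x _ _ hd; omega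
  | @cons y y' q hadj w ih =>
    intro hp x hxy hxmem hd
    rw [Walk.cons_isPath_iff] at hp
    rw [Walk.support_cons, List.mem_cons] at hxmem
    push_neg at hxmem
    rcases adj_dist_cases hT hadj (b := b) with hc | hc
    · -- y' is farther: apply IH with x := y
      have := ih hp.1 y hadj.symm hp.2 hc
      omega
    · -- y' is closer to b than y : then x = y', contradiction
      exact absurd (down_unique hT hxy hadj hd hc) (by
        intro h; exact hxmem.2 (h ▸ w.start_mem_support))

end Helpers

/-- If a group G acts (without inversions) on a tree and A, B are subgroups
each fixing a vertex, and ⟨A,B⟩ = A ⊔ B is abelian, then A ⊔ B fixes a vertex. -/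
theorem abelian_join_of_elliptics_is_elliptic {G V : Type*} [Group G] [MulAction G V]
    (T : SimpleGraph V) (hT : T.IsTree)
    (hact : ∀ (g : G) (u v : V), T.Adj u v → T.Adj (g • u) (g • v))
    (hni : ∀ (g : G) (u v : V), T.Adj u v → ¬(g • u = v ∧ g • v = u))
    (A B : Subgroup G) (a b : V)
    (hA : ∀ g ∈ A, g • a = a) (hB : ∀ g ∈ B, g • b = b)
    (hab : IsMulCommutative (A ⊔ B : Subgroup G)) :
    ∃ v : V, ∀ g ∈ A ⊔ B, g • v = v := by
  classical
  haveI := hab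
  set S : Set V := {v | ∀ g ∈ A, g • v = v} with hS
  have haS : a ∈ S := fun g hg => hA g hg
  -- pick p ∈ S minimizing distance to b
  have hne : ((fun v => T.dist v b) '' S).Nonempty := ⟨T.dist a b, a, haS, rfl⟩
  obtain ⟨p, hpS, hpd⟩ := Nat.sInf_mem hne
  have hmin : ∀ q ∈ S, T.dist p b ≤ T.dist q b := fun q hq =>
    le_of_eq_of_le hpd (Nat.sInf_le ⟨q, hq, rfl⟩)
  -- uniqueness of the nearest point of S to b
  have huniq : ∀ q ∈ S, T.dist q b = T.dist p b → q = p := by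
    intro q hqS hqd
    by_contra hne'
    -- path from p to q, contained in S
    obtain ⟨w, hw⟩ := hT.existsUnique_path p q
    have hwS : ∀ v ∈ w.support, v ∈ S := by
      intro v hv g hg
      exact fix_path hT hact g (hpS g hg) (hqS g hg) w hw.1 v hv
    -- case on the first step of w
    cases w with
    | nil => exact hne' rfl
    | @cons _ v₁ _ hadj w' =>
      have hp' : (Walk.cons hadj w').IsPath := hw.1
      rw [Walk.cons_isPath_iff] at hp'
      have hv₁S : v₁ ∈ S := hwS v₁ (by
        rw [Walk.support_cons]; exact List.mem_cons_of_mem _ w'.start_mem_support)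
      rcases adj_dist_cases hT hadj (b := b) with hc | hc
      · -- dist p b + 1 = dist v₁ b : ascending, endpoint farther, contradiction
        have := ascend hT b w' hp'.1 p hadj.symm hp'.2 hc
        omega
      · -- v₁ closer to b than p : contradicts minimality
        have := hmin v₁ hv₁S
        omega
  -- B fixes p
  have hBfix : ∀ h ∈ B, h • p = p := by
    intro h hh
    -- h • p is in S
    have hqS : h • p ∈ S := by
      intro g hg
      have hcomm : g * h = h * g := Subgroup.mul_comm_of_mem_isMulCommutative (H := A ⊔ B)
        (Subgroup.mem_sup_left hg) (Subgroup.mem_sup_right hh)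
      calc g • h • p = (g * h) • p := (mul_smul g h p).symm
        _ = (h * g) • p := by rw [hcomm]
        _ = h • g • p := mul_smul h g p
        _ = h • p := by rw [hpS g hg]
    -- same distance to b
    have hqd : T.dist (h • p) b = T.dist p b := by
      conv_lhs => rw [← hB h hh]
      exact dist_smul' hT.isConnected hact h p b
    exact huniq (h • p) hqS hqd
  -- conclude: A ⊔ B ≤ stabilizer of p
  refine ⟨p, fun g hg => ?_⟩
  have hle : A ⊔ B ≤ MulAction.stabilizer G p := by
    refine sup_le (fun g hg => ?_) (fun g hg => ?_)
    · exact MulAction.mem_stabilizer_iff.mpr (hpS g hg)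
    · exact MulAction.mem_stabilizer_iff.mpr (hBfix g hg)
  exact MulAction.mem_stabilizer_iff.mp (hle hg)
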